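/- Let T be a finite tree with m edges. Then there exist ⌊m/2⌋ pairwise disjoint unordered pairs of edges of T such that the two edges in each pair share a common vertex. Equivalently, one can choose 2·⌊m/2⌋ of the edges of T and partition them into ⌊m/2⌋ pairs of adjacent edges. -/

import Mathlib

/-- Abstract pairing lemma for rooted forests given by a parent map `p` with a
depth function `d`.  The vertices of `S` (all distinct from the root `r`) can be
grouped into `⌊|S|/2⌋` disjoint pairs, each pair being either parent/child or
siblings. -/
lemma abstract_pairing {V : Type*} [DecidableEq V] (r : V) (p : V → V) (d : V → ℕ) :
    ∀ (n : ℕ) (S : Finset V), S.card = n → r ∉ S →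
      (∀ v ∈ S, p v ∈ S ∨ p v = r) →
      (∀ v ∈ S, d v = d (p v) + 1) →
      ∃ f : Fin (n / 2) → V × V,
        (∀ i, (f i).1 ∈ S ∧ (f i).2 ∈ S ∧ (f i).1 ≠ (f i).2 ∧
          (p (f i).1 = (f i).2 ∨ p (f i).1 = p (f i).2)) ∧
        (∀ i j, i ≠ j → (f i).1 ≠ (f j).1 ∧ (f i).1 ≠ (f j).2 ∧
          (f i).2 ≠ (f j).1 ∧ (f i).2 ≠ (f j).2) := by
  intro n
  induction n using Nat.strong_induction_on with
  | _ n IH =>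
    intro S hcard hr hpar hd
    rcases Nat.lt_or_ge n 2 with hn | hn
    · -- trivial case: no pairs needed
      refine ⟨fun i => (r, r), ?_, ?_⟩ <;>
      · intro i
        exact absurd i.2 (by omega)
    · -- pick a vertex of maximal depth
      have hS : S.Nonempty := by
        rw [← Finset.card_pos, hcard]; omega
      obtain ⟨v, hvS, hvmax⟩ := S.exists_max_image d hS
      have hnochild : ∀ x ∈ S, p x ≠ v := by
        intro x hx hpx
        have h1 := hd x hx
        have h2 := hvmax x hx
        rw [hpx] at h1; omega
      by_cases hsib : ∃ w ∈ S, w ≠ v ∧ p w = p v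
      · -- sibling case: pair v with a sibling w
        obtain ⟨w, hwS, hwv, hpw⟩ := hsib
        have hwd : d w = d v := by
          have h1 := hd w hwS
          have h2 := hd v hvS
          rw [hpw] at h1; omega
        have hnochildw : ∀ x ∈ S, p x ≠ w := by
          intro x hx hpx
          have h1 := hd x hx
          have h2 := hvmax x hx
          rw [hpx, hwd] at h1; omega
        set S' := (S.erase v).erase w with hS'
        have hsub : S' ⊆ S := (Finset.erase_subset _ _).trans (Finset.erase_subset _ _)
        have hvS' : v ∉ S' := by simp [hS', Finset.mem_erase]
        have hwS' : w ∉ S' := by simp [hS']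
        have hcard' : S'.card = n - 2 := by
          rw [hS', Finset.card_erase_of_mem (Finset.mem_erase.2 ⟨hwv, hwS⟩),
            Finset.card_erase_of_mem hvS, hcard]
          omega
        obtain ⟨f', hf'1, hf'2⟩ := IH (n - 2) (by omega) S' hcard' (fun h => hr (hsub h))
          (fun x hx => by
            rcases hpar x (hsub hx) with h | h
            · left
              simp only [hS', Finset.mem_erase]
              exact ⟨hnochildw x (hsub hx), hnochild x (hsub hx), h⟩
            · right; exact h)
          (fun x hx => hd x (hsub hx))
        refine ⟨fun i => if h : (i : ℕ) < (n - 2) / 2 then f' ⟨i, h⟩ else (v, w), ?_, ?_⟩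
        · intro i
          by_cases h : (i : ℕ) < (n - 2) / 2
          · simp only [dif_pos h]
            obtain ⟨h1, h2, h3, h4⟩ := hf'1 ⟨i, h⟩
            exact ⟨hsub h1, hsub h2, h3, h4⟩
          · simp only [dif_neg h]
            exact ⟨hvS, hwS, Ne.symm hwv, Or.inr hpw.symm⟩
        · intro i j hij
          by_cases hi : (i : ℕ) < (n - 2) / 2 <;> by_cases hj : (j : ℕ) < (n - 2) / 2
          · simp only [dif_pos hi, dif_pos hj]
            exact hf'2 ⟨i, hi⟩ ⟨j, hj⟩ (by simpa [Fin.ext_iff] using hij)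
          · simp only [dif_pos hi, dif_neg hj]
            obtain ⟨h1, h2, -, -⟩ := hf'1 ⟨i, hi⟩
            exact ⟨fun h => hvS' (h ▸ h1), fun h => hwS' (h ▸ h1),
              fun h => hvS' (h ▸ h2), fun h => hwS' (h ▸ h2)⟩
          · simp only [dif_neg hi, dif_pos hj]
            obtain ⟨h1, h2, -, -⟩ := hf'1 ⟨j, hj⟩
            exact ⟨fun h => hvS' (h ▸ h1), fun h => hvS' (h ▸ h2),
              fun h => hwS' (h ▸ h1), fun h => hwS' (h ▸ h2)⟩
          · exact absurd (Fin.ext (show (i : ℕ) = (j : ℕ) by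
              have hi' := i.2; have hj' := j.2; omega)) hij
      · -- no sibling: pair v with its parent u = p v
        push_neg at hsib
        have hu : p v ∈ S := by
          rcases hpar v hvS with h | h
          · exact h
          · -- p v = r : then S = {v}, contradicting n ≥ 2
            exfalso
            -- every element of S equals v
            have key : ∀ k, ∀ x ∈ S, d x = k → x = v := by
              intro k
              induction k using Nat.strong_induction_on with
              | _ k IHk =>
                intro x hx hdx
                by_contra hxv
                rcases hpar x hx with h' | h'
                · have hne : p x ≠ v := hnochild x hx
                  have : p x = v := IHk (d (p x)) (by have := hd x hx; omega) (p x) h' rfl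
                  exact hne this
                · exact hsib x hx hxv (h'.trans h.symm)
            have : ∀ x ∈ S, x = v := fun x hx => key (d x) x hx rfl
            have : S ⊆ {v} := fun x hx => Finset.mem_singleton.2 (this x hx)
            have := Finset.card_le_card this
            rw [hcard, Finset.card_singleton] at this
            omega
        set u := p v with hu'
        have huv : u ≠ v := by
          intro h
          have := hd v hvS
          rw [← hu', h] at this; omega
        have hnochildu : ∀ x ∈ S, x ≠ v → p x ≠ u := by
          intro x hx hxv hpx
          exact hsib x hx hxv (hpx.trans hu')
        set S' := (S.erase v).erase u with hS'
        have hsub : S' ⊆ S := (Finset.erase_subset _ _).trans (Finset.erase_subset _ _)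
        have hvS' : v ∉ S' := by simp [hS', Finset.mem_erase]
        have huS' : u ∉ S' := by simp [hS']
        have hcard' : S'.card = n - 2 := by
          rw [hS', Finset.card_erase_of_mem (Finset.mem_erase.2 ⟨huv, hu⟩),
            Finset.card_erase_of_mem hvS, hcard]
          omega
        obtain ⟨f', hf'1, hf'2⟩ := IH (n - 2) (by omega) S' hcard' (fun h => hr (hsub h))
          (fun x hx => by
            have hxS := hsub hx
            have hxv : x ≠ v := fun h => hvS' (h ▸ hx)
            rcases hpar x hxS with h | h
            · left
              simp only [hS', Finset.mem_erase]
              exact ⟨hnochildu x hxS hxv, hnochild x hxS, h⟩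
            · right; exact h)
          (fun x hx => hd x (hsub hx))
        refine ⟨fun i => if h : (i : ℕ) < (n - 2) / 2 then f' ⟨i, h⟩ else (v, u), ?_, ?_⟩
        · intro i
          by_cases h : (i : ℕ) < (n - 2) / 2
          · simp only [dif_pos h]
            obtain ⟨h1, h2, h3, h4⟩ := hf'1 ⟨i, h⟩
            exact ⟨hsub h1, hsub h2, h3, h4⟩
          · simp only [dif_neg h]
            exact ⟨hvS, hu, Ne.symm huv, Or.inl (by trivial)⟩
        · intro i j hij
          by_cases hi : (i : ℕ) < (n - 2) / 2 <;> by_cases hj : (j : ℕ) < (n - 2) / 2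
          · simp only [dif_pos hi, dif_pos hj]
            exact hf'2 ⟨i, hi⟩ ⟨j, hj⟩ (by simpa [Fin.ext_iff] using hij)
          · simp only [dif_pos hi, dif_neg hj]
            obtain ⟨h1, h2, -, -⟩ := hf'1 ⟨i, hi⟩
            exact ⟨fun h => hvS' (h ▸ h1), fun h => huS' (h ▸ h1),
              fun h => hvS' (h ▸ h2), fun h => huS' (h ▸ h2)⟩
          · simp only [dif_neg hi, dif_pos hj]
            obtain ⟨h1, h2, -, -⟩ := hf'1 ⟨j, hj⟩
            exact ⟨fun h => hvS' (h ▸ h1), fun h => hvS' (h ▸ h2),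
              fun h => huS' (h ▸ h1), fun h => huS' (h ▸ h2)⟩
          · exact absurd (Fin.ext (show (i : ℕ) = (j : ℕ) by
              have hi' := i.2; have hj' := j.2; omega)) hij

/-- In a connected graph, every vertex `v ≠ r` has a neighbour strictly closer
to `r`. -/
lemma exists_parent {V : Type*} {G : SimpleGraph V} (hG : G.Connected) (r v : V)
    (hv : v ≠ r) : ∃ u, G.Adj v u ∧ G.dist u r + 1 = G.dist v r := by
  obtain ⟨p, hp⟩ := (hG v r).exists_walk_length_eq_dist
  have hpos : 0 < G.dist v r := hG.pos_dist_of_ne hv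
  cases p with
  | nil => simp at hp hpos <;> omega
  | @cons _ w _ h q =>
    refine ⟨w, h, ?_⟩
    simp only [SimpleGraph.Walk.length_cons] at hp
    have h1 : G.dist w r ≤ q.length := SimpleGraph.dist_le q
    have h3 : G.dist v w ≤ 1 :=
      (SimpleGraph.dist_le h.toWalk).trans (by simp)
    have h2 : G.dist v r ≤ G.dist v w + G.dist w r := hG.dist_triangle
    omega

/-- In any finite tree with `m` edges one can choose `⌊m/2⌋` pairwise disjoint
unordered pairs of edges such that the two edges in each pair share a common vertex. -/
theorem tree_exists_disjoint_adjacent_edge_pairs {V : Type*} [Fintype V] [DecidableEq V]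
    (T : SimpleGraph V) [DecidableRel T.Adj] (htree : T.IsTree)
    (m : ℕ) (hm : m = T.edgeFinset.card) :
    ∃ f : Fin (m / 2) → Sym2 V × Sym2 V,
      (∀ i, (f i).1 ∈ T.edgeSet ∧ (f i).2 ∈ T.edgeSet ∧ (f i).1 ≠ (f i).2 ∧
        ∃ v : V, v ∈ (f i).1 ∧ v ∈ (f i).2) ∧
      (∀ i j, i ≠ j →
        ({(f i).1, (f i).2} : Set (Sym2 V)) ∩ {(f j).1, (f j).2} = ∅) := by
  classical
  have hconn := htree.isConnected
  have hne : Nonempty V := hconn.nonempty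
  obtain ⟨r⟩ := hne
  -- parent map and depth
  have hpar : ∀ v : V, v ≠ r → ∃ u, T.Adj v u ∧ T.dist u r + 1 = T.dist v r :=
    fun v hv => exists_parent hconn r v hv
  choose p0 hp0adj hp0dist using hpar
  set p : V → V := fun v => if h : v ≠ r then p0 v h else r with hp
  set d : V → ℕ := fun v => T.dist v r with hdd
  have hpadj : ∀ v ≠ r, T.Adj v (p v) := by
    intro v hv; simp only [hp, dif_pos hv]; exact hp0adj v hv
  have hpd : ∀ v ≠ r, d (p v) + 1 = d v := by
    intro v hv; simp only [hp, hdd, dif_pos hv]; exact hp0dist v hv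
  set S : Finset V := Finset.univ.erase r with hS
  have hmem : ∀ v, v ∈ S ↔ v ≠ r := by
    intro v; simp [hS]
  have hcardS : S.card = m := by
    have h1 := htree.card_edgeFinset
    have : S.card = Fintype.card V - 1 := by
      rw [hS, Finset.card_erase_of_mem (Finset.mem_univ r), Finset.card_univ]
    omega
  -- injectivity of v ↦ s(v, p v) on S
  have hinj : ∀ x, x ≠ r → ∀ y, y ≠ r → s(x, p x) = s(y, p y) → x = y := by
    intro x hx y hy h
    rw [Sym2.eq_iff] at h
    rcases h with ⟨h1, h2⟩ | ⟨h1, h2⟩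
    · exact h1
    · exfalso
      have d1 := hpd x hx
      have d2 := hpd y hy
      rw [h2] at d1
      rw [← h1] at d2
      omega
  obtain ⟨g, hg1, hg2⟩ := abstract_pairing r p d m S hcardS (by simp [hS])
    (fun v hv => by
      by_cases h : p v = r
      · right; exact h
      · left; exact (hmem _).2 h)
    (fun v hv => (hpd v ((hmem v).1 hv)).symm)
  refine ⟨fun i => (s((g i).1, p (g i).1), s((g i).2, p (g i).2)), ?_, ?_⟩
  · intro i
    obtain ⟨h1, h2, h3, h4⟩ := hg1 i
    have h1r := (hmem _).1 h1
    have h2r := (hmem _).1 h2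
    refine ⟨(hpadj _ h1r), (hpadj _ h2r), ?_, ?_⟩
    · exact fun h => h3 (hinj _ h1r _ h2r h)
    · rcases h4 with h | h
      · exact ⟨(g i).2, by rw [← h]; simp, by simp⟩
      · exact ⟨p (g i).1, by simp, by rw [h]; simp⟩
  · intro i j hij
    obtain ⟨h1i, h2i, -, -⟩ := hg1 i
    obtain ⟨h1j, h2j, -, -⟩ := hg1 j
    obtain ⟨ne1, ne2, ne3, ne4⟩ := hg2 i j hij
    have h1ir := (hmem _).1 h1i
    have h2ir := (hmem _).1 h2i
    have h1jr := (hmem _).1 h1j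
    have h2jr := (hmem _).1 h2j
    ext e
    simp only [Set.mem_inter_iff, Set.mem_insert_iff, Set.mem_singleton_iff,
      Set.mem_empty_iff_false, iff_false, not_and]
    rintro (rfl | rfl) (h | h)
    · exact ne1 (hinj _ h1ir _ h1jr h)
    · exact ne2 (hinj _ h1ir _ h2jr h)
    · exact ne3 (hinj _ h2ir _ h1jr h)
    · exact ne4 (hinj _ h2ir _ h2jr h)
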